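/- Every 2×2 matrix B over the real octonion division algebra 𝕆 has a left eigenvalue: there exist λ ∈ 𝕆 and nonzero v ∈ 𝕆² with Bv = λv. Specifically, if B = [[a,b],[c,d]], either b = 0 (and a is an eigenvalue), or b ≠ 0 and any root s of b x² + (a−d)x − c gives eigenvalue a + bs with eigenvector (1, s)ᵀ. -/

import Mathlib

/-- Cayley–Dickson double (with γ = -1) of an algebra with involution. -/
def CD (A : Type*) : Type _ := A × A

namespace CD

variable {A : Type*}

instance [AddCommGroup A] : AddCommGroup (CD A) := inferInstanceAs (AddCommGroup (A × A))
noncomputable instance [AddCommGroup A] [Module ℝ A] : Module ℝ (CD A) :=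
  inferInstanceAs (Module ℝ (A × A))

/-- Build an element of the double from its two halves. -/
def mk (a b : A) : CD A := (a, b)

section
set_option linter.unusedSectionVars false

/-- A star operation fixing `1`. -/
class StarOne (A : Type*) [One A] [Star A] : Prop where
  star_one : star (1 : A) = 1

variable [NonAssocRing A] [StarAddMonoid A] [StarOne A]

instance : One (CD A) := ⟨((1 : A), 0)⟩
instance : Mul (CD A) :=
  ⟨fun x y => (x.1 * y.1 - star y.2 * x.2, y.2 * x.1 + x.2 * star y.1)⟩
instance : Star (CD A) := ⟨fun x => (star x.1, -x.2)⟩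

lemma mul_def (x y : CD A) :
    x * y = (x.1 * y.1 - star y.2 * x.2, y.2 * x.1 + x.2 * star y.1) := rfl
lemma one_def : (1 : CD A) = ((1 : A), 0) := rfl
lemma star_def (x : CD A) : star x = (star x.1, -x.2) := rfl
lemma add_def (x y : CD A) : x + y = (x.1 + y.1, x.2 + y.2) := rfl
lemma zero_def : (0 : CD A) = ((0 : A), 0) := rfl

instance instNonAssocRing : NonAssocRing (CD A) where
  __ := (inferInstance : AddCommGroup (CD A))
  left_distrib a b c := by
    rw [show a * b + a * c = ((a * b).1 + (a * c).1, (a * b).2 + (a * c).2) from rfl]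
    refine Prod.ext ?_ ?_ <;> simp only [mul_def] <;>
      simp [mul_def, add_def, mul_add, add_mul, star_add] <;> abel
  right_distrib a b c := by
    rw [show a * c + b * c = ((a * c).1 + (b * c).1, (a * c).2 + (b * c).2) from rfl]
    refine Prod.ext ?_ ?_ <;> simp only [mul_def] <;>
      simp [mul_def, add_def, mul_add, add_mul, star_add] <;> abel
  zero_mul a := by
    refine Prod.ext ?_ ?_ <;> simp only [mul_def] <;> simp [mul_def, zero_def]
  mul_zero a := by
    refine Prod.ext ?_ ?_ <;> simp only [mul_def] <;> simp [mul_def, zero_def]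
  one_mul a := by
    refine Prod.ext ?_ ?_ <;> simp only [mul_def] <;> simp [mul_def, one_def]
  mul_one a := by
    refine Prod.ext ?_ ?_ <;> simp only [mul_def] <;> simp [mul_def, one_def, StarOne.star_one]

instance instStarAddMonoid : StarAddMonoid (CD A) where
  star_involutive x := by
    refine Prod.ext ?_ ?_ <;> rw [star_def, star_def] <;> simp [star_def]
  star_add x y := by
    rw [show star x + star y = ((star x).1 + (star y).1, (star x).2 + (star y).2) from rfl]
    refine Prod.ext ?_ ?_ <;> simp only [star_def] <;> simp [star_def, add_def, add_comm]

instance instStarOne : StarOne (CD A) :=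
  ⟨Prod.ext (StarOne.star_one) (by simp only [star_def]; simp [one_def, star_def])⟩

end

end CD

instance : CD.StarOne ℝ := ⟨by simp⟩

/-- The real octonions, as a three-fold Cayley–Dickson double of ℝ. -/
def Octonion : Type := CD (CD (CD ℝ))

instance : NonAssocRing Octonion := inferInstanceAs (NonAssocRing (CD (CD (CD ℝ))))
instance : StarAddMonoid Octonion := inferInstanceAs (StarAddMonoid (CD (CD (CD ℝ))))
instance : CD.StarOne Octonion := inferInstanceAs (CD.StarOne (CD (CD (CD ℝ))))
noncomputable instance : Module ℝ Octonion := inferInstanceAs (Module ℝ (CD (CD (CD ℝ))))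

/-- The real sedenions, as the Cayley–Dickson double of the octonions. -/
def Sedenion : Type := CD Octonion

instance : NonAssocRing Sedenion := inferInstanceAs (NonAssocRing (CD Octonion))
instance : StarAddMonoid Sedenion := inferInstanceAs (StarAddMonoid (CD Octonion))
instance : CD.StarOne Sedenion := inferInstanceAs (CD.StarOne (CD Octonion))
noncomputable instance : Module ℝ Sedenion := inferInstanceAs (Module ℝ (CD Octonion))

/-- Assemble a complex number, quaternion, octonion, sedenion from real coordinates. -/
def mkC (f : ℕ → ℝ) (k : ℕ) : CD ℝ := CD.mk (f k) (f (k+1))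
def mkH (f : ℕ → ℝ) (k : ℕ) : CD (CD ℝ) := CD.mk (mkC f k) (mkC f (k+2))
def mkO (f : ℕ → ℝ) (k : ℕ) : Octonion := CD.mk (mkH f k) (mkH f (k+4))
def mkS (f : ℕ → ℝ) : Sedenion := CD.mk (mkO f 0) (mkO f 8)

/-- The standard basis `e₀, …, e₁₅` of the sedenions. -/
def sE (n : ℕ) : Sedenion := mkS (fun k => if k = n then 1 else 0)

/-- The standard basis `e₀, …, e₇` of the octonions. -/
def oE (n : ℕ) : Octonion := mkO (fun k => if k = n then 1 else 0) 0

/-- Powers in a (power-associative) non-associative algebra. -/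
def cdpow {A : Type*} [One A] [Mul A] (x : A) : ℕ → A
  | 0 => 1
  | n+1 => cdpow x n * x

namespace Oct

lemma cd_sub_def {A : Type*} [AddCommGroup A] (x y : CD A) :
    x - y = (x.1 - y.1, x.2 - y.2) := rfl
lemma cd_neg_def {A : Type*} [AddCommGroup A] (x : CD A) :
    -x = (-x.1, -x.2) := rfl

def o8 (x0 x1 x2 x3 x4 x5 x6 x7 : ℝ) : Octonion :=
  CD.mk (CD.mk (CD.mk x0 x1) (CD.mk x2 x3)) (CD.mk (CD.mk x4 x5) (CD.mk x6 x7))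

def toP (x : Octonion) : (((ℝ×ℝ)×(ℝ×ℝ))×((ℝ×ℝ)×(ℝ×ℝ))) := x

lemma o8_eta (x : Octonion) : x = o8 (toP x).1.1.1 (toP x).1.1.2 (toP x).1.2.1 (toP x).1.2.2
    (toP x).2.1.1 (toP x).2.1.2 (toP x).2.2.1 (toP x).2.2.2 := rfl

lemma o8_surj (x : Octonion) : ∃ x0 x1 x2 x3 x4 x5 x6 x7 : ℝ,
    x = o8 x0 x1 x2 x3 x4 x5 x6 x7 :=
  ⟨_,_,_,_,_,_,_,_, o8_eta x⟩

lemma mk_mul' {A : Type*} [NonAssocRing A] [StarAddMonoid A] [CD.StarOne A] (a b c d : A) :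
    CD.mk a b * CD.mk c d = CD.mk (a * c - star d * b) (d * a + b * star c) := rfl
lemma mk_star' {A : Type*} [NonAssocRing A] [StarAddMonoid A] [CD.StarOne A] (a b : A) :
    star (CD.mk a b) = CD.mk (star a) (-b) := rfl
lemma mk_add' {A : Type*} [NonAssocRing A] (a b c d : A) :
    CD.mk a b + CD.mk c d = CD.mk (a + c) (b + d) := rfl
lemma mk_sub' {A : Type*} [NonAssocRing A] (a b c d : A) :
    CD.mk a b - CD.mk c d = CD.mk (a - c) (b - d) := rfl
lemma mk_neg' {A : Type*} [NonAssocRing A] (a b : A) :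
    -(CD.mk a b) = CD.mk (-a) (-b) := rfl

set_option maxHeartbeats 1000000 in
lemma mul_o8 (x0 x1 x2 x3 x4 x5 x6 x7 y0 y1 y2 y3 y4 y5 y6 y7 : ℝ) :
    o8 x0 x1 x2 x3 x4 x5 x6 x7 * o8 y0 y1 y2 y3 y4 y5 y6 y7 =
    o8 (x0*y0 - y1*x1 - y2*x2 - x3*y3 - y4*x4 - x5*y5 - x6*y6 - y7*x7)
       (y1*x0 + x1*y0 - x3*y2 + y3*x2 - x5*y4 + y5*x4 - y7*x6 + x7*y6)
       (y2*x0 - x1*y3 + x2*y0 + y1*x3 - x6*y4 - y5*x7 + y6*x4 + x5*y7)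
       (x1*y2 + y3*x0 - y1*x2 + x3*y0 + y5*x6 - x7*y4 - x5*y6 + y7*x4)
       (y4*x0 - x1*y5 - x2*y6 - y7*x3 + x4*y0 + y1*x5 + y2*x6 + x7*y3)
       (x1*y4 + y5*x0 - y7*x2 + x3*y6 - y1*x4 + x5*y0 + x7*y2 - y3*x6)
       (x2*y4 - y5*x3 + y6*x0 + x1*y7 - y2*x4 + x5*y3 + x6*y0 - y1*x7)
       (y5*x2 + x3*y4 - x1*y6 + y7*x0 - x5*y2 - y3*x4 + y1*x6 + x7*y0) := by
  show (_ * _ : CD (CD (CD ℝ))) = _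
  simp only [o8, mk_mul', mk_star', mk_add', mk_sub', mk_neg', star_trivial]
  refine congrArg₂ CD.mk (congrArg₂ CD.mk (congrArg₂ CD.mk ?_ ?_) (congrArg₂ CD.mk ?_ ?_))
    (congrArg₂ CD.mk (congrArg₂ CD.mk ?_ ?_) (congrArg₂ CD.mk ?_ ?_)) <;> ring

lemma smul_o8 (r x0 x1 x2 x3 x4 x5 x6 x7 : ℝ) :
    r • o8 x0 x1 x2 x3 x4 x5 x6 x7 = o8 (r*x0) (r*x1) (r*x2) (r*x3) (r*x4) (r*x5) (r*x6) (r*x7) := rfl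

lemma star_o8 (x0 x1 x2 x3 x4 x5 x6 x7 : ℝ) :
    star (o8 x0 x1 x2 x3 x4 x5 x6 x7) = o8 x0 (-x1) (-x2) (-x3) (-x4) (-x5) (-x6) (-x7) := rfl

lemma add_o8 (x0 x1 x2 x3 x4 x5 x6 x7 y0 y1 y2 y3 y4 y5 y6 y7 : ℝ) :
    o8 x0 x1 x2 x3 x4 x5 x6 x7 + o8 y0 y1 y2 y3 y4 y5 y6 y7 =
    o8 (x0+y0) (x1+y1) (x2+y2) (x3+y3) (x4+y4) (x5+y5) (x6+y6) (x7+y7) := rfl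

lemma sub_o8 (x0 x1 x2 x3 x4 x5 x6 x7 y0 y1 y2 y3 y4 y5 y6 y7 : ℝ) :
    o8 x0 x1 x2 x3 x4 x5 x6 x7 - o8 y0 y1 y2 y3 y4 y5 y6 y7 =
    o8 (x0-y0) (x1-y1) (x2-y2) (x3-y3) (x4-y4) (x5-y5) (x6-y6) (x7-y7) := rfl

lemma neg_o8 (x0 x1 x2 x3 x4 x5 x6 x7 : ℝ) :
    -(o8 x0 x1 x2 x3 x4 x5 x6 x7) = o8 (-x0) (-x1) (-x2) (-x3) (-x4) (-x5) (-x6) (-x7) := rfl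

lemma zero_o8 : (0 : Octonion) = o8 0 0 0 0 0 0 0 0 := rfl
lemma one_o8 : (1 : Octonion) = o8 1 0 0 0 0 0 0 0 := rfl

lemma o8_ext {a0 a1 a2 a3 a4 a5 a6 a7 b0 b1 b2 b3 b4 b5 b6 b7 : ℝ}
    (h0 : a0 = b0) (h1 : a1 = b1) (h2 : a2 = b2) (h3 : a3 = b3)
    (h4 : a4 = b4) (h5 : a5 = b5) (h6 : a6 = b6) (h7 : a7 = b7) :
    o8 a0 a1 a2 a3 a4 a5 a6 a7 = o8 b0 b1 b2 b3 b4 b5 b6 b7 := by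
  subst h0 h1 h2 h3 h4 h5 h6 h7; rfl

lemma o8_eq_iff {a0 a1 a2 a3 a4 a5 a6 a7 b0 b1 b2 b3 b4 b5 b6 b7 : ℝ} :
    o8 a0 a1 a2 a3 a4 a5 a6 a7 = o8 b0 b1 b2 b3 b4 b5 b6 b7 ↔
    (a0 = b0 ∧ a1 = b1 ∧ a2 = b2 ∧ a3 = b3 ∧ a4 = b4 ∧ a5 = b5 ∧ a6 = b6 ∧ a7 = b7) := by
  constructor
  · intro h
    exact ⟨congrArg (fun z => (toP z).1.1.1) h, congrArg (fun z => (toP z).1.1.2) h,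
      congrArg (fun z => (toP z).1.2.1) h, congrArg (fun z => (toP z).1.2.2) h,
      congrArg (fun z => (toP z).2.1.1) h, congrArg (fun z => (toP z).2.1.2) h,
      congrArg (fun z => (toP z).2.2.1) h, congrArg (fun z => (toP z).2.2.2) h⟩
  · rintro ⟨h0,h1,h2,h3,h4,h5,h6,h7⟩; exact o8_ext h0 h1 h2 h3 h4 h5 h6 h7

/-- twice the real part -/
def tre (x : Octonion) : ℝ := 2 * (toP x).1.1.1
/-- the squared norm -/
def nrm (x : Octonion) : ℝ :=
  (toP x).1.1.1^2 + (toP x).1.1.2^2 + (toP x).1.2.1^2 + (toP x).1.2.2^2 +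
  (toP x).2.1.1^2 + (toP x).2.1.2^2 + (toP x).2.2.1^2 + (toP x).2.2.2^2
/-- the real inner product -/
def inn (x y : Octonion) : ℝ :=
  (toP x).1.1.1*(toP y).1.1.1 + (toP x).1.1.2*(toP y).1.1.2 +
  (toP x).1.2.1*(toP y).1.2.1 + (toP x).1.2.2*(toP y).1.2.2 +
  (toP x).2.1.1*(toP y).2.1.1 + (toP x).2.1.2*(toP y).2.1.2 +
  (toP x).2.2.1*(toP y).2.2.1 + (toP x).2.2.2*(toP y).2.2.2

lemma tre_o8 (x0 x1 x2 x3 x4 x5 x6 x7 : ℝ) : tre (o8 x0 x1 x2 x3 x4 x5 x6 x7) = 2*x0 := rfl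
lemma nrm_o8 (x0 x1 x2 x3 x4 x5 x6 x7 : ℝ) :
    nrm (o8 x0 x1 x2 x3 x4 x5 x6 x7) = x0^2+x1^2+x2^2+x3^2+x4^2+x5^2+x6^2+x7^2 := rfl
lemma inn_o8 (x0 x1 x2 x3 x4 x5 x6 x7 y0 y1 y2 y3 y4 y5 y6 y7 : ℝ) :
    inn (o8 x0 x1 x2 x3 x4 x5 x6 x7) (o8 y0 y1 y2 y3 y4 y5 y6 y7) =
    x0*y0+x1*y1+x2*y2+x3*y3+x4*y4+x5*y5+x6*y6+x7*y7 := rfl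

end Oct
namespace Oct

section identities

set_option maxHeartbeats 2000000

lemma sq_eq (x : Octonion) : x * x = tre x • x - nrm x • (1:Octonion) := by
  obtain ⟨x0,x1,x2,x3,x4,x5,x6,x7,rfl⟩ := o8_surj x
  rw [mul_o8, tre_o8, nrm_o8, one_o8, smul_o8, smul_o8, sub_o8]
  apply o8_ext <;> ring

lemma mul_conj_mul (x y : Octonion) : x * (star x * y) = nrm x • y := by
  obtain ⟨x0,x1,x2,x3,x4,x5,x6,x7,rfl⟩ := o8_surj x
  obtain ⟨y0,y1,y2,y3,y4,y5,y6,y7,rfl⟩ := o8_surj y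
  rw [star_o8, mul_o8, mul_o8, nrm_o8, smul_o8]
  apply o8_ext <;> ring

lemma nrm_mul (x y : Octonion) : nrm (x * y) = nrm x * nrm y := by
  obtain ⟨x0,x1,x2,x3,x4,x5,x6,x7,rfl⟩ := o8_surj x
  obtain ⟨y0,y1,y2,y3,y4,y5,y6,y7,rfl⟩ := o8_surj y
  rw [mul_o8, nrm_o8, nrm_o8, nrm_o8]; ring

lemma alt_right (x y : Octonion) : (x * y) * y = x * (y * y) := by
  obtain ⟨x0,x1,x2,x3,x4,x5,x6,x7,rfl⟩ := o8_surj x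
  obtain ⟨y0,y1,y2,y3,y4,y5,y6,y7,rfl⟩ := o8_surj y
  rw [mul_o8, mul_o8, mul_o8, mul_o8]
  apply o8_ext <;> ring

lemma smul_mul (r : ℝ) (x y : Octonion) : (r • x) * y = r • (x * y) := by
  obtain ⟨x0,x1,x2,x3,x4,x5,x6,x7,rfl⟩ := o8_surj x
  obtain ⟨y0,y1,y2,y3,y4,y5,y6,y7,rfl⟩ := o8_surj y
  rw [smul_o8, mul_o8, mul_o8, smul_o8]
  apply o8_ext <;> ring

lemma mul_smul' (r : ℝ) (x y : Octonion) : x * (r • y) = r • (x * y) := by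
  obtain ⟨x0,x1,x2,x3,x4,x5,x6,x7,rfl⟩ := o8_surj x
  obtain ⟨y0,y1,y2,y3,y4,y5,y6,y7,rfl⟩ := o8_surj y
  rw [smul_o8, mul_o8, mul_o8, smul_o8]
  apply o8_ext <;> ring

lemma tre_conj_mul (x y : Octonion) : tre (star x * y) = 2 * inn x y := by
  obtain ⟨x0,x1,x2,x3,x4,x5,x6,x7,rfl⟩ := o8_surj x
  obtain ⟨y0,y1,y2,y3,y4,y5,y6,y7,rfl⟩ := o8_surj y
  rw [star_o8, mul_o8, tre_o8, inn_o8]; ring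

lemma nrm_star (x : Octonion) : nrm (star x) = nrm x := by
  obtain ⟨x0,x1,x2,x3,x4,x5,x6,x7,rfl⟩ := o8_surj x
  rw [star_o8, nrm_o8, nrm_o8]; ring

lemma nrm_smul (r : ℝ) (x : Octonion) : nrm (r • x) = r^2 * nrm x := by
  obtain ⟨x0,x1,x2,x3,x4,x5,x6,x7,rfl⟩ := o8_surj x
  rw [smul_o8, nrm_o8, nrm_o8]; ring

lemma tre_smul (r : ℝ) (x : Octonion) : tre (r • x) = r * tre x := by
  obtain ⟨x0,x1,x2,x3,x4,x5,x6,x7,rfl⟩ := o8_surj x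
  rw [smul_o8, tre_o8, tre_o8]; ring

lemma nrm_nonneg (x : Octonion) : 0 ≤ nrm x := by
  obtain ⟨x0,x1,x2,x3,x4,x5,x6,x7,rfl⟩ := o8_surj x
  rw [nrm_o8]; positivity

lemma nrm_eq_zero {x : Octonion} : nrm x = 0 ↔ x = 0 := by
  obtain ⟨x0,x1,x2,x3,x4,x5,x6,x7,rfl⟩ := o8_surj x
  rw [nrm_o8, zero_o8, o8_eq_iff]
  constructor
  · intro h
    refine ⟨?_,?_,?_,?_,?_,?_,?_,?_⟩ <;> nlinarith [sq_nonneg x0, sq_nonneg x1, sq_nonneg x2,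
      sq_nonneg x3, sq_nonneg x4, sq_nonneg x5, sq_nonneg x6, sq_nonneg x7]
  · rintro ⟨rfl,rfl,rfl,rfl,rfl,rfl,rfl,rfl⟩; ring

lemma nrm_pos {x : Octonion} (hx : x ≠ 0) : 0 < nrm x :=
  lt_of_le_of_ne (nrm_nonneg x) (fun h => hx (nrm_eq_zero.mp h.symm))

lemma nrm_expand (t : ℝ) (b e : Octonion) :
    nrm (t • b + e) = t^2 * nrm b + 2*t* inn b e + nrm e := by
  obtain ⟨x0,x1,x2,x3,x4,x5,x6,x7,rfl⟩ := o8_surj b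
  obtain ⟨y0,y1,y2,y3,y4,y5,y6,y7,rfl⟩ := o8_surj e
  rw [smul_o8, add_o8, nrm_o8, nrm_o8, nrm_o8, inn_o8]; ring

lemma inn_expand (t n : ℝ) (b e c : Octonion) :
    inn (t • b + e) (n • b + c) =
      t*n*nrm b + t*inn b c + n*inn b e + inn e c := by
  obtain ⟨x0,x1,x2,x3,x4,x5,x6,x7,rfl⟩ := o8_surj b
  obtain ⟨y0,y1,y2,y3,y4,y5,y6,y7,rfl⟩ := o8_surj e
  obtain ⟨z0,z1,z2,z3,z4,z5,z6,z7,rfl⟩ := o8_surj c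
  simp only [smul_o8, add_o8, inn_o8, nrm_o8]; ring

lemma one_ne_zero' : (1 : Octonion) ≠ 0 := by
  rw [one_o8, zero_o8, Ne, o8_eq_iff]
  simp

end identities

end Oct
namespace Oct

lemma sixth_pos (b3 c5 c4 c3 c2 c1 c0 t1 : ℝ) (hb : 0 < b3) :
    ∃ t2, t1 < t2 ∧ 0 < b3*t2^6 + c5*t2^5 + c4*t2^4 + c3*t2^3 + c2*t2^2 + c1*t2 + c0 := by
  set S := (|c5|+|c4|+|c3|+|c2|+|c1|+|c0|)/b3 + 1 with hS
  refine ⟨max (t1+1) (max 1 S), lt_of_lt_of_le (by linarith) (le_max_left _ _), ?_⟩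
  set T := max (t1+1) (max 1 S) with hT
  have hT1 : 1 ≤ T := le_trans (le_max_left _ _) (le_max_right _ _)
  have hTS : S ≤ T := le_trans (le_max_right _ _) (le_max_right _ _)
  have hT0 : 0 < T := lt_of_lt_of_le one_pos hT1
  have h5 : (0:ℝ) < T^5 := by positivity
  have h45 : T^4 ≤ T^5 := pow_le_pow_right₀ hT1 (by norm_num)
  have h35 : T^3 ≤ T^5 := pow_le_pow_right₀ hT1 (by norm_num)
  have h25 : T^2 ≤ T^5 := pow_le_pow_right₀ hT1 (by norm_num)
  have h15 : T^1 ≤ T^5 := pow_le_pow_right₀ hT1 (by norm_num)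
  have g5 : c5*T^5 ≥ -(abs c5 * T^5) := by nlinarith [neg_abs_le c5, abs_nonneg c5]
  have g4 : c4*T^4 ≥ -(abs c4 * T^5) := by
    nlinarith [neg_abs_le c4, abs_nonneg c4, pow_nonneg hT0.le 4]
  have g3 : c3*T^3 ≥ -(abs c3 * T^5) := by
    nlinarith [neg_abs_le c3, abs_nonneg c3, pow_nonneg hT0.le 3]
  have g2 : c2*T^2 ≥ -(abs c2 * T^5) := by
    nlinarith [neg_abs_le c2, abs_nonneg c2, pow_nonneg hT0.le 2]
  have g1 : c1*T ≥ -(abs c1 * T^5) := by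
    nlinarith [neg_abs_le c1, abs_nonneg c1, hT0.le]
  have g0 : c0 ≥ -(abs c0 * T^5) := by nlinarith [neg_abs_le c0, abs_nonneg c0]
  have hbS : b3*S = abs c5+abs c4+abs c3+abs c2+abs c1+abs c0 + b3 := by
    rw [hS]; field_simp
  have hp5 : (0:ℝ) ≤ b3*T^5 := by positivity
  have hb6 : b3*T^6 ≥ b3*S*T^5 := by
    have h := mul_le_mul_of_nonneg_right hTS hp5
    nlinarith [h]
  have hbST : b3*S*T^5 = (abs c5+abs c4+abs c3+abs c2+abs c1+abs c0 + b3)*T^5 := by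
    rw [hbS]
  have hpos : 0 < b3*T^5 := by positivity
  linarith

lemma solve_system (β p1 p2 p3 E C : ℝ) (hβ : 0 < β) :
    ∃ t n : ℝ, t*(β*t^2+2*p1*t+E) - 2*t*p2 - 2*p3 = 2*n*(β*t+p1) ∧
               n*(β*t^2+2*p1*t+E) = β*n^2 + 2*n*p2 + C := by
  set A : ℝ → ℝ := fun t => β*t^2+2*p1*t+E with hA
  set f : ℝ → ℝ := fun t => t*(A t) - 2*t*p2 - 2*p3 with hf
  set u : ℝ → ℝ := fun t => β*t+p1 with hu
  set P : ℝ → ℝ := fun t =>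
    2*(u t)*(f t)*(A t) - β*(f t)^2 - 4*(u t)*p2*(f t) - 4*C*(u t)^2 with hP
  have hPcont : Continuous P := by
    rw [hP, hf, hA, hu]; fun_prop
  set t0 : ℝ := -p1/β with ht0
  have hu0 : u t0 = 0 := by rw [hu, ht0]; field_simp; ring
  have hut : ∀ t, u t = β*(t - t0) := by
    intro t; rw [hu, ht0]; field_simp; ring
  by_cases hneg : ∃ t, t0 < t ∧ P t < 0
  · obtain ⟨ta, hta, hPa⟩ := hneg
    obtain ⟨tb, htb, hPb⟩ := sixth_pos (β^3) (6*β^2*p1)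
      (2*E*β^2 - 4*β^2*p2 + 12*β*p1^2) (8*E*β*p1 - 16*β*p1*p2 + 8*p1^3)
      (-4*C*β^2 + E^2*β - 4*E*β*p2 + 8*E*p1^2 - 4*β*p1*p3 + 4*β*p2^2 - 16*p1^2*p2)
      (-8*C*β*p1 + 2*E^2*p1 - 8*E*p1*p2 - 8*p1^2*p3 + 8*p1*p2^2)
      (-4*C*p1^2 - 4*E*p1*p3 - 4*β*p3^2 + 8*p1*p2*p3) ta (by positivity)
    have hPco : P tb = β^3*tb^6 + (6*β^2*p1)*tb^5
        + (2*E*β^2 - 4*β^2*p2 + 12*β*p1^2)*tb^4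
        + (8*E*β*p1 - 16*β*p1*p2 + 8*p1^3)*tb^3
        + (-4*C*β^2 + E^2*β - 4*E*β*p2 + 8*E*p1^2 - 4*β*p1*p3 + 4*β*p2^2 - 16*p1^2*p2)*tb^2
        + (-8*C*β*p1 + 2*E^2*p1 - 8*E*p1*p2 - 8*p1^2*p3 + 8*p1*p2^2)*tb
        + (-4*C*p1^2 - 4*E*p1*p3 - 4*β*p3^2 + 8*p1*p2*p3) := by
      rw [hP, hf, hA, hu]; ring
    have hPb' : 0 < P tb := by rw [hPco]; exact hPb
    have hmem : (0:ℝ) ∈ Set.Icc (P ta) (P tb) := ⟨hPa.le, hPb'.le⟩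
    obtain ⟨t, htmem, htP⟩ := intermediate_value_Icc htb.le hPcont.continuousOn hmem
    have htt0 : t0 < t := lt_of_lt_of_le hta htmem.1
    have hut' : 0 < u t := by rw [hut]; have h := sub_pos.mpr htt0; positivity
    refine ⟨t, f t/(2*u t), ?_, ?_⟩
    · show f t = 2*(f t/(2*u t))*(u t)
      field_simp
    · show (f t/(2*u t))*(A t) = β*(f t/(2*u t))^2 + 2*(f t/(2*u t))*p2 + C
      set n := f t/(2*u t) with hn
      have hfn : f t = 2*n*(u t) := by rw [hn]; field_simp
      have key : P t = 4*(u t)^2*(n*(A t) - β*n^2 - 2*n*p2 - C) := by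
        rw [hP]
        linear_combination (2*(u t)*(A t) - β*(f t + 2*n*(u t)) - 4*(u t)*p2) * hfn
      have hz : 4*(u t)^2*(n*(A t) - β*n^2 - 2*n*p2 - C) = 0 := by rw [← key, htP]
      have h4u : (0:ℝ) < 4*(u t)^2 := by positivity
      have := (mul_eq_zero.mp hz).resolve_left h4u.ne'
      linarith
  · push_neg at hneg
    have hP0 : P t0 = -(β*(f t0)^2) := by simp only [hP]; rw [hu0]; ring
    have h0le : 0 ≤ P t0 := by
      have hcw : Filter.Tendsto P (nhdsWithin t0 (Set.Ioi t0)) (nhds (P t0)) :=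
        (hPcont.continuousAt).continuousWithinAt
      exact ge_of_tendsto hcw
        (Filter.eventually_of_mem self_mem_nhdsWithin (fun t ht => hneg t ht))
    have hf0 : f t0 = 0 := by
      have hsq : (f t0)^2 = 0 := by nlinarith
      exact pow_eq_zero_iff two_ne_zero |>.mp hsq
    have hΔ : 0 ≤ (A t0 - 2*p2)^2 - 4*β*C := by
      by_contra hlt
      push_neg at hlt
      set f1 : ℝ → ℝ := fun t => β*t^2 + p1*t + (E - 2*p2 - p1^2/β) with hf1
      have hfd : ∀ t, f t = (t - t0)*(f1 t) + f t0 := by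
        intro t; rw [hf, hf1, hA, ht0]; field_simp; ring
      have hfact : ∀ t, P t =
          -(β*(t-t0)^2*((f1 t - (A t - 2*p2))^2 - ((A t - 2*p2)^2 - 4*β*C))) := by
        intro t
        have h1 := hfd t
        rw [hf0, add_zero] at h1
        simp only [hP]; rw [h1, hut t]; ring
      have hDcont : Continuous (fun t => (A t - 2*p2)^2 - 4*β*C) := by rw [hA]; fun_prop
      have hopen : IsOpen {t : ℝ | (A t - 2*p2)^2 - 4*β*C < 0} :=
        isOpen_lt hDcont continuous_const
      obtain ⟨ε, hε, hball⟩ := Metric.isOpen_iff.mp hopen t0 hlt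
      have ht'mem : t0 + ε/2 ∈ Metric.ball t0 ε := by
        have hd : dist (t0 + ε/2) t0 = ε/2 := by
          rw [Real.dist_eq, show t0 + ε/2 - t0 = ε/2 by ring, abs_of_pos (by linarith)]
        rw [Metric.mem_ball, hd]; linarith
      have hD' : (A (t0 + ε/2) - 2*p2)^2 - 4*β*C < 0 := hball ht'mem
      have hPn : P (t0 + ε/2) < 0 := by
        have h2 : (0:ℝ) < (t0 + ε/2 - t0)^2 := by
          rw [show t0 + ε/2 - t0 = ε/2 by ring]; positivity
        have h3 : 0 < (f1 (t0 + ε/2) - (A (t0 + ε/2) - 2*p2))^2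
            - ((A (t0 + ε/2) - 2*p2)^2 - 4*β*C) := by
          nlinarith [sq_nonneg (f1 (t0 + ε/2) - (A (t0 + ε/2) - 2*p2))]
        have h4 := mul_pos (mul_pos hβ h2) h3
        rw [hfact (t0 + ε/2)]
        exact neg_lt_zero.mpr h4
      have := hneg (t0 + ε/2) (by linarith)
      linarith
    refine ⟨t0, ((A t0 - 2*p2) + Real.sqrt ((A t0 - 2*p2)^2 - 4*β*C))/(2*β), ?_, ?_⟩
    · show f t0 = 2*_*(u t0)
      rw [hu0, hf0]; ring
    · show _*(A t0) = β*_^2 + 2*_*p2 + C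
      have hs := Real.sq_sqrt hΔ
      set s := Real.sqrt ((A t0 - 2*p2)^2 - 4*β*C) with hsd
      clear_value s
      generalize A t0 = a at hs ⊢
      field_simp
      linear_combination (-(1:ℝ)) * hs

end Oct
namespace Oct

lemma tre_sub (x y : Octonion) : tre (x - y) = tre x - tre y := by
  obtain ⟨x0,x1,x2,x3,x4,x5,x6,x7,rfl⟩ := o8_surj x
  obtain ⟨y0,y1,y2,y3,y4,y5,y6,y7,rfl⟩ := o8_surj y
  rw [sub_o8, tre_o8, tre_o8, tre_o8]; ring

lemma tre_one : tre (1 : Octonion) = 2 := by rw [one_o8, tre_o8]; norm_num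

lemma inv_mul (q r : Octonion) (hq : q ≠ 0) :
    q * ((nrm q)⁻¹ • (star q * r)) = r := by
  rw [mul_smul', mul_conj_mul, smul_smul, inv_mul_cancel₀ (nrm_pos hq).ne', one_smul]

lemma exists_sqrt (z : Octonion) : ∃ u, u * u = z := by
  have hz : z = (z - (tre z / 2) • 1) + (tre z / 2) • 1 := by abel
  set z0 : ℝ := tre z / 2 with hz0
  set zv : Octonion := z - z0 • 1 with hzv
  have htzv : tre zv = 0 := by
    rw [hzv, tre_sub, tre_smul, tre_one, hz0]; ring
  by_cases hm : nrm zv = 0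
  · have hzv0 : zv = 0 := nrm_eq_zero.mp hm
    have hz' : z = z0 • 1 := by rw [hz, hzv0, zero_add]
    by_cases hz0' : 0 ≤ z0
    · refine ⟨Real.sqrt z0 • 1, ?_⟩
      rw [smul_mul, mul_smul', smul_smul, one_mul, Real.mul_self_sqrt hz0', hz']
    · refine ⟨Real.sqrt (-z0) • (o8 0 1 0 0 0 0 0 0), ?_⟩
      rw [smul_mul, mul_smul', smul_smul, Real.mul_self_sqrt (by linarith), mul_o8, smul_o8, hz',
        one_o8, smul_o8]
      apply o8_ext <;> ring
  · have hmpos : 0 < nrm zv := lt_of_le_of_ne (nrm_nonneg zv) (Ne.symm hm)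
    set m : ℝ := nrm zv with hmdef
    set R : ℝ := Real.sqrt (z0^2 + m) with hR
    have hR2 : R^2 = z0^2 + m := Real.sq_sqrt (by positivity)
    have hR0 : 0 ≤ R := Real.sqrt_nonneg _
    have hRz : 0 < z0 + R := by nlinarith
    set X : ℝ := (z0 + R)/2 with hX
    have hXpos : 0 < X := by rw [hX]; linarith
    set x : ℝ := Real.sqrt X with hx
    have hxpos : 0 < x := Real.sqrt_pos.mpr hXpos
    have hx2 : x*x = X := Real.mul_self_sqrt hXpos.le
    set ρ : ℝ := Real.sqrt m with hρ
    have hρpos : 0 < ρ := Real.sqrt_pos.mpr hmpos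
    have hρ2 : ρ*ρ = m := Real.mul_self_sqrt hmpos.le
    set y : ℝ := ρ/(2*x) with hy
    refine ⟨x • 1 + (y/ρ) • zv, ?_⟩
    have hzvsq : zv * zv = -(m • 1) := by
      rw [sq_eq, htzv, ← hmdef, zero_smul, zero_sub]
    have hexp : (x • 1 + (y/ρ) • zv) * (x • 1 + (y/ρ) • zv)
        = (x*x - (y/ρ)*(y/ρ)*m) • 1 + (2*(x*(y/ρ))) • zv := by
      simp only [mul_add, add_mul, smul_mul, mul_smul', smul_smul, one_mul, mul_one, hzvsq]
      module
    have hcoef1 : 2*(x*(y/ρ)) = 1 := by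
      rw [hy]; field_simp
    have h4X : 4*X*X - m = 4*z0*X := by
      rw [hX]; linear_combination hR2
    have hyρ : y/ρ = 1/(2*x) := by
      rw [hy]; field_simp
    have hx2' : x*x = (tre z/2 + R)/2 := by rw [hx2, hX, hz0]
    have hcoef0 : x*x - (y/ρ)*(y/ρ)*m = z0 := by
      rw [hx2, hyρ]
      have hR2' : R^2 = (tre z/2)^2 + m := by rw [hR2, hz0]
      field_simp
      linear_combination (2*R - tre z) * hx2' + hR2'
    rw [hexp, hcoef1, hcoef0, one_smul, hz]
    abel
  -- done
lemma solve_quadratic (b e c : Octonion) (hb : b ≠ 0) :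
    ∃ s, b * (s * s) + e * s - c = 0 := by
  by_cases hμ : ∃ μ : ℝ, e = μ • b
  · obtain ⟨μ, rfl⟩ := hμ
    have hbw : b * ((nrm b)⁻¹ • (star b * c)) = c := inv_mul b c hb
    set w : Octonion := (nrm b)⁻¹ • (star b * c) with hw
    obtain ⟨u, hu⟩ := exists_sqrt (w + (μ^2/4) • 1)
    refine ⟨u - (μ/2) • 1, ?_⟩
    have key : (u - (μ/2) • 1) * (u - (μ/2) • 1) + μ • (u - (μ/2) • 1) = w := by
      simp only [sub_mul, mul_sub, smul_mul, mul_smul', smul_smul, one_mul, mul_one, hu]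
      module
    have hstep : b * ((u - (μ/2) • 1) * (u - (μ/2) • 1)) + (μ • b) * (u - (μ/2) • 1) = b * w := by
      rw [smul_mul, ← mul_smul', ← mul_add, key]
    rw [hstep, hbw, sub_self]
  · have hq : ∀ t : ℝ, t • b + e ≠ 0 := by
      intro t h
      exact hμ ⟨-t, by rw [neg_smul, eq_neg_of_add_eq_zero_right h]⟩
    obtain ⟨t, n, h1, h2⟩ := solve_system (nrm b) (inn b e) (inn b c) (inn e c)
      (nrm e) (nrm c) (nrm_pos hb)
    set q : Octonion := t • b + e with hqdef
    set r : Octonion := n • b + c with hrdef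
    have hqne : q ≠ 0 := hq t
    have hnq : nrm q = nrm b*t^2 + 2*(inn b e)*t + nrm e := by
      rw [hqdef, nrm_expand]; ring
    have hnqpos : 0 < nrm q := nrm_pos hqne
    set s : Octonion := (nrm q)⁻¹ • (star q * r) with hsdef
    have hqr : q * s = r := inv_mul q r hqne
    have htre : tre s = t := by
      rw [hsdef, tre_smul, tre_conj_mul]
      have hinn : inn q r = t*n*nrm b + t*inn b c + n*inn b e + inn e c := by
        rw [hqdef, hrdef, inn_expand]
      have h2inn : 2 * inn q r = t * nrm q := by
        rw [hinn, hnq]; nlinarith [h1]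
      have : (nrm q)⁻¹ * (2 * inn q r) = (nrm q)⁻¹ * (t * nrm q) := by rw [h2inn]
      rw [this]; field_simp
    have hnrm : nrm s = n := by
      rw [hsdef, nrm_smul, nrm_mul, nrm_star]
      have hnr : nrm r = n * nrm q := by
        rw [hrdef, nrm_expand, hnq]; nlinarith [h2]
      rw [hnr]
      field_simp
    have hss : s * s = t • s - n • 1 := by rw [sq_eq, htre, hnrm]
    refine ⟨s, ?_⟩
    have hbs : b * (s * s) = t • (b * s) - n • b := by
      rw [hss, mul_sub, mul_smul' t b s, mul_smul' n b 1, mul_one]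
    have hqs : t • (b * s) + e * s = r := by
      rw [← smul_mul, ← add_mul, ← hqdef, hqr]
    rw [hbs, hrdef] at *
    calc t • (b * s) - n • b + e * s - c
        = (t • (b * s) + e * s) - (n • b + c) := by abel
      _ = (n • b + c) - (n • b + c) := by rw [hqs]
      _ = 0 := sub_self _

end Oct
namespace Oct

lemma mulVec2 (a b c d x y : Octonion) :
    Matrix.mulVec !![a, b; c, d] ![x, y] = ![a*x + b*y, c*x + d*y] := by
  funext i
  fin_cases i <;>
    simp [Matrix.mulVec, dotProduct, Fin.sum_univ_two]

lemma smul2 (lam x y : Octonion) : lam • ![x, y] = ![lam*x, lam*y] := by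
  funext i
  fin_cases i <;> simp [Pi.smul_apply, smul_eq_mul]

lemma vec2_eq {x y x' y' : Octonion} (h1 : x = x') (h2 : y = y') : ![x,y] = ![x',y'] := by
  subst h1 h2; rfl

lemma vec2_ne_zero_left {x y : Octonion} (hx : x ≠ 0) : ![x, y] ≠ 0 := by
  intro h
  exact hx (by simpa using congrFun h 0)

lemma vec2_ne_zero_right {x y : Octonion} (hy : y ≠ 0) : ![x, y] ≠ 0 := by
  intro h
  exact hy (by simpa using congrFun h 1)

end Oct

open Oct in
/-- Every `2 × 2` matrix `B = [[a,b],[c,d]]` over the real octonions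
has a left eigenvalue. Specifically, if `b = 0` then `a` is a left eigenvalue, and if
`b ≠ 0` then any root `s` of `b x² + (a - d)x - c` yields the left eigenvalue `a + b s`
with eigenvector `(1, s)ᵀ`. -/
theorem stmt15 (a b c d : Octonion) :
    (∃ (lam : Octonion) (v : Fin 2 → Octonion), v ≠ 0 ∧
      Matrix.mulVec !![a, b; c, d] v = lam • v) ∧
    (b = 0 → ∃ v : Fin 2 → Octonion, v ≠ 0 ∧
      Matrix.mulVec !![a, b; c, d] v = a • v) ∧
    (b ≠ 0 → ∀ s : Octonion, b * (s * s) + (a - d) * s - c = 0 →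
      Matrix.mulVec !![a, b; c, d] ![1, s] = (a + b * s) • ![1, s]) := by
  have hvec : ∀ s : Octonion, b * (s * s) + (a - d) * s - c = 0 →
      Matrix.mulVec !![a, b; c, d] ![1, s] = (a + b * s) • ![1, s] := by
    intro s hs
    have hbs : b * (s * s) = c - (a - d) * s :=
      eq_sub_iff_add_eq.mpr (by rwa [sub_eq_zero] at hs)
    rw [mulVec2, smul2]
    refine vec2_eq ?_ ?_
    · rw [mul_one, mul_one]
    · rw [mul_one, add_mul, alt_right, hbs, sub_mul]
      abel
  have h2 : b = 0 → ∃ v : Fin 2 → Octonion, v ≠ 0 ∧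
      Matrix.mulVec !![a, b; c, d] v = a • v := by
    intro hb0
    subst hb0
    by_cases had : a - d = 0
    · refine ⟨![0, 1], vec2_ne_zero_right one_ne_zero', ?_⟩
      have hda : d = a := (sub_eq_zero.mp had).symm
      rw [mulVec2, smul2]
      exact vec2_eq (by simp) (by simp [hda])
    · set v1 : Octonion := (nrm (a - d))⁻¹ • (star (a - d) * c) with hv1
      have hsol : (a - d) * v1 = c := inv_mul _ _ had
      rw [sub_mul] at hsol
      refine ⟨![1, v1], vec2_ne_zero_left one_ne_zero', ?_⟩
      rw [mulVec2, smul2]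
      refine vec2_eq (by simp) ?_
      rw [mul_one, ← hsol]
      abel
  refine ⟨?_, h2, fun _ s hs => hvec s hs⟩
  by_cases hb : b = 0
  · obtain ⟨v, hv, hev⟩ := h2 hb
    exact ⟨a, v, hv, hev⟩
  · obtain ⟨s, hs⟩ := solve_quadratic b (a - d) c hb
    exact ⟨a + b * s, ![1, s], vec2_ne_zero_left one_ne_zero', hvec s hs⟩
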